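/- Let K be a field and let B = ⊕_{i≥0} B_i be a commutative graded K-algebra that is finitely generated as a K-algebra by homogeneous elements. Let M = ⊕_{i≥0} M_i be a finitely generated graded B-module. For q ≥ 0 write B_{>q} = ⊕_{i>q} B_i (a homogeneous ideal of B), B_{≤q} = B/B_{>q}, and M_{≤q} = M/(⊕_{i>q} M_i), a graded module over B_{≤q}. Every degree-preserving K-derivation d : B → M maps B_{>q} into ⊕_{i>q} M_i, hence induces a degree-preserving K-derivation B_{≤q} → M_{≤q}. Then there exists q₀ ≥ 0 such that for all q ≥ q₀ this truncation map is a bijection from the space of degree-preserving K-derivations B → M onto the space of degree-preserving K-derivations B_{≤q} → M_{≤q}. -/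

import Mathlib

open MvPolynomial Finsupp DirectSum

namespace TruncAux

variable {K B M : Type*} [CommRing K] [CommRing B] [Algebra K B]
  (𝒜 : ℕ → Submodule K B) [GradedAlgebra 𝒜]
  [AddCommGroup M] [Module K M] [Module B M] [IsScalarTower K B M]
  (ℳ : ℕ → Submodule K M) [DirectSum.Decomposition ℳ] [SetLike.GradedSMul 𝒜 ℳ]
  {σ : Type*} [Fintype σ]

theorem prod_pow_mem (w : σ → ℕ) (f : σ → B) (hf : ∀ s, f s ∈ 𝒜 (w s))
    (d : σ →₀ ℕ) (t : Finset σ) :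
    (∏ i ∈ t, f i ^ d i) ∈ 𝒜 (∑ i ∈ t, d i * w i) := by
  classical
  induction t using Finset.induction with
  | empty => simpa using SetLike.one_mem_graded 𝒜
  | insert _ _ h ih =>
      rw [Finset.prod_insert h, Finset.sum_insert h]
      refine SetLike.mul_mem_graded ?_ ih
      simpa [smul_eq_mul] using SetLike.pow_mem_graded (d _) (hf _)

theorem aeval_mem (w : σ → ℕ) (f : σ → B) (hf : ∀ s, f s ∈ 𝒜 (w s))
    {p : MvPolynomial σ K} {e : ℕ} (hp : p.IsWeightedHomogeneous w e) :
    aeval f p ∈ 𝒜 e := by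
  classical
  rw [p.as_sum, map_sum]
  refine Submodule.sum_mem _ fun d hd => ?_
  rw [aeval_monomial]
  have hde : (weight w) d = e := hp (MvPolynomial.mem_support_iff.mp hd)
  have h1 : (algebraMap K B) (coeff d p) ∈ 𝒜 0 := SetLike.algebraMap_mem_graded 𝒜 _
  have h2 : (d.prod fun i k => f i ^ k) ∈ 𝒜 ((weight w) d) := by
    rw [Finsupp.prod, weight_apply, Finsupp.sum]
    simpa [smul_eq_mul] using prod_pow_mem 𝒜 w f hf d d.support
  have h3 := SetLike.mul_mem_graded h1 h2
  rwa [zero_add, hde] at h3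

/-- The "universal derivation" with prescribed values on the variables. -/
noncomputable def delta (f : σ → B) (m : σ → M) : MvPolynomial σ K →ₗ[K] M :=
  ∑ s : σ, LinearMap.smulRight ((aeval f).toLinearMap ∘ₗ (pderiv s).toLinearMap) (m s)

theorem delta_apply (f : σ → B) (m : σ → M) (p : MvPolynomial σ K) :
    delta f m p = ∑ s : σ, aeval f (pderiv s p) • m s := by
  simp [delta, LinearMap.sum_apply, LinearMap.smulRight_apply]

theorem delta_mul (f : σ → B) (m : σ → M) (p q : MvPolynomial σ K) :
    delta f m (p * q) = aeval f p • delta f m q + aeval f q • delta f m p := by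
  rw [delta_apply, delta_apply, delta_apply]
  have h1 : (aeval f p) • ∑ s : σ, aeval f (pderiv s q) • m s
      = ∑ s : σ, aeval f p • (aeval f (pderiv s q) • m s) := Finset.smul_sum
  have h2 : (aeval f q) • ∑ s : σ, aeval f (pderiv s p) • m s
      = ∑ s : σ, aeval f q • (aeval f (pderiv s p) • m s) := Finset.smul_sum
  rw [h1, h2, ← Finset.sum_add_distrib]
  refine Finset.sum_congr rfl fun s _ => ?_
  rw [pderiv_mul, map_add, map_mul, map_mul, add_smul,
    mul_comm (aeval f (pderiv s p)) (aeval f q),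
    mul_smul (aeval f q) (aeval f (pderiv s p)) (m s),
    mul_smul (aeval f p) (aeval f (pderiv s q)) (m s), add_comm]

theorem delta_X (f : σ → B) (m : σ → M) (t : σ) :
    delta f m (X t : MvPolynomial σ K) = m t := by
  classical
  have h : ∀ s ∈ Finset.univ, s ≠ t → aeval f (pderiv s (X t : MvPolynomial σ K)) • m s = 0 := by
    intro s _ hs
    rw [pderiv_X_of_ne (Ne.symm hs), map_zero, zero_smul]
  rw [delta_apply, Finset.sum_eq_single_of_mem t (Finset.mem_univ t) h]
  simp

theorem delta_mem (w : σ → ℕ) (f : σ → B) (m : σ → M)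
    (hf : ∀ s, f s ∈ 𝒜 (w s)) (hm : ∀ s, m s ∈ ℳ (w s))
    {p : MvPolynomial σ K} {e : ℕ} (hp : p.IsWeightedHomogeneous w e) :
    delta f m p ∈ ℳ e := by
  classical
  rw [delta_apply]
  refine Submodule.sum_mem _ fun s _ => ?_
  have hps : aeval f (pderiv s p) = ∑ d ∈ p.support, aeval f (pderiv s (monomial d (coeff d p))) := by
    conv_lhs => rw [p.as_sum]
    rw [map_sum, map_sum]
  rw [hps, Finset.sum_smul]
  refine Submodule.sum_mem _ fun d hd => ?_
  rw [pderiv_monomial]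
  by_cases h0 : d s = 0
  · simp [h0]
  · have hde : (weight w) d = e := hp (MvPolynomial.mem_support_iff.mp hd)
    have hd1 : d = (d - Finsupp.single s 1) + Finsupp.single s 1 := by
      ext i
      rcases eq_or_ne i s with rfl | hi
      · simp [Nat.sub_add_cancel (Nat.one_le_iff_ne_zero.mpr h0)]
      · simp [Finsupp.single_eq_of_ne (Ne.symm hi), hi]
    have hws : (weight w) (Finsupp.single s 1) = w s := by
      simp [weight_apply, Finsupp.sum_single_index]
    have hw' : (weight w) (d - Finsupp.single s 1) + w s = e := by
      rw [← hws, ← map_add, ← hd1, hde]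
    have h1 : aeval f (monomial (d - Finsupp.single s 1) (coeff d p * d s)) ∈
        𝒜 ((weight w) (d - Finsupp.single s 1)) :=
      aeval_mem 𝒜 w f hf (isWeightedHomogeneous_monomial _ _ _ rfl)
    have h2 := SetLike.GradedSMul.smul_mem h1 (hm s)
    rwa [vadd_eq_add, hw'] at h2

theorem decompose_sum (t : Finset ℕ) (a : ℕ → M) (ha : ∀ e ∈ t, a e ∈ ℳ e) (j : ℕ) :
    ((DirectSum.decompose ℳ (∑ e ∈ t, a e) j : ℳ j) : M) = if j ∈ t then a j else 0 := by
  classical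
  induction t using Finset.induction with
  | empty => simp
  | @insert i t hi ih =>
      rw [Finset.sum_insert hi, DirectSum.decompose_add, DirectSum.add_apply,
        Submodule.coe_add, ih (fun e he => ha e (Finset.mem_insert_of_mem he))]
      rcases eq_or_ne j i with rfl | hji
      · rw [DirectSum.decompose_of_mem_same ℳ (ha j (Finset.mem_insert_self j t))]
        simp [hi]
      · rw [DirectSum.decompose_of_mem_ne ℳ (ha i (Finset.mem_insert_self i t)) (Ne.symm hji)]
        simp [Finset.mem_insert, hji]

theorem sum_homog_eq_zero {t : Finset ℕ} {a : ℕ → M} (ha : ∀ e ∈ t, a e ∈ ℳ e)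
    (h : (∑ e ∈ t, a e) = 0) : ∀ e ∈ t, a e = 0 := by
  intro e he
  have := decompose_sum ℳ t a ha e
  rw [h] at this
  simpa [he] using this.symm

theorem sum_homog_mem {t : Finset ℕ} {a : ℕ → M} (ha : ∀ e ∈ t, a e ∈ ℳ e) {i : ℕ}
    (h : (∑ e ∈ t, a e) ∈ ℳ i) : ∀ e ∈ t, e ≠ i → a e = 0 := by
  intro e he hei
  have h1 := decompose_sum ℳ t a ha e
  rw [DirectSum.decompose_of_mem_ne ℳ h (Ne.symm hei)] at h1
  simpa [he] using h1.symm

/-- The submodule of elements all of whose components in degrees `≤ q` vanish. -/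
def high (q : ℕ) : Submodule K M where
  carrier := {m | ∀ j ≤ q, ((DirectSum.decompose ℳ m j : ℳ j) : M) = 0}
  zero_mem' := by intro j _; simp
  add_mem' := by
    intro x y hx hy j hj
    rw [DirectSum.decompose_add, DirectSum.add_apply, Submodule.coe_add, hx j hj, hy j hj,
      add_zero]
  smul_mem' := by
    intro c x hx j hj
    have h1 : DirectSum.decompose ℳ (c • x) j = c • DirectSum.decompose ℳ x j := by
      rw [DirectSum.decompose_smul, DirectSum.smul_apply]
    rw [h1, Submodule.coe_smul, hx j hj, smul_zero]

theorem mem_high {q : ℕ} {m : M} :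
    m ∈ high ℳ q ↔ ∀ j ≤ q, ((DirectSum.decompose ℳ m j : ℳ j) : M) = 0 := Iff.rfl

theorem homog_mem_high {q i : ℕ} (hi : q < i) {m : M} (hm : m ∈ ℳ i) : m ∈ high ℳ q := by
  intro j hj
  exact DirectSum.decompose_of_mem_ne ℳ hm (by omega)

include 𝒜 in
theorem smul_mem_high {q : ℕ} (a : B) {m : M} (hm : m ∈ high ℳ q) :
    a • m ∈ high ℳ q := by
  classical
  revert m
  induction a using DirectSum.Decomposition.inductionOn 𝒜 with
  | zero => intro m _; rw [zero_smul]; exact (high ℳ q).zero_mem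
  | homogeneous a =>
      rename_i k
      intro m hm
      rw [← DirectSum.sum_support_decompose ℳ m, Finset.smul_sum]
      refine Submodule.sum_mem _ fun i hi => ?_
      have hiq : q < i := by
        by_contra h
        have h0 := hm i (by omega)
        rw [DFinsupp.mem_support_iff] at hi
        exact hi (by exact_mod_cast Subtype.ext h0)
      have hmem := SetLike.GradedSMul.smul_mem a.2 (DirectSum.decompose ℳ m i).2
      rw [vadd_eq_add] at hmem
      exact homog_mem_high ℳ (by omega) hmem
  | add a a' ha ha' =>
      intro m hm
      rw [add_smul]
      exact (high ℳ q).add_mem (ha hm) (ha' hm)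

include 𝒜 in
theorem span_high_le {q : ℕ} {m : M}
    (hm : m ∈ Submodule.span B (⋃ i ∈ Set.Ioi q, ((ℳ i : Set M)))) :
    m ∈ high ℳ q := by
  induction hm using Submodule.span_induction with
  | mem x hx =>
      obtain ⟨i, hi, hxi⟩ := Set.mem_iUnion₂.mp hx
      exact homog_mem_high ℳ hi hxi
  | zero => exact (high ℳ q).zero_mem
  | add x y _ _ hx hy => exact (high ℳ q).add_mem hx hy
  | smul b x _ hx => exact smul_mem_high 𝒜 ℳ b hx

include 𝒜 in
theorem eq_zero_of_low_mem_span {q i : ℕ} (hi : i ≤ q) {m : M} (hmi : m ∈ ℳ i)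
    (hm : m ∈ Submodule.span B (⋃ i ∈ Set.Ioi q, ((ℳ i : Set M)))) :
    m = 0 := by
  have h1 := (span_high_le 𝒜 ℳ hm) i hi
  rwa [DirectSum.decompose_of_mem_same ℳ hmi] at h1

include ℳ in
theorem ideal_smul_mem_span {q : ℕ} {x : B}
    (hx : x ∈ Ideal.span (⋃ i ∈ Set.Ioi q, ((𝒜 i : Set B)))) (y : M) :
    x • y ∈ Submodule.span B (⋃ i ∈ Set.Ioi q, ((ℳ i : Set M))) := by
  revert y
  induction hx using Submodule.span_induction with
  | mem g hg =>
      obtain ⟨i, hi, hgi⟩ := Set.mem_iUnion₂.mp hg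
      intro y
      induction y using DirectSum.Decomposition.inductionOn ℳ with
      | zero => rw [smul_zero]; exact Submodule.zero_mem _
      | homogeneous y =>
          rename_i j
          refine Submodule.subset_span ?_
          refine Set.mem_iUnion₂.mpr ⟨i + j, by simpa using Nat.lt_of_lt_of_le hi (Nat.le_add_right _ _), ?_⟩
          have h2 := SetLike.GradedSMul.smul_mem hgi y.2
          rwa [vadd_eq_add] at h2
      | add y y' hy hy' =>
          rw [smul_add]
          exact Submodule.add_mem _ hy hy'
  | zero => intro y; rw [zero_smul]; exact Submodule.zero_mem _
  | add a b _ _ ha hb =>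
      intro y
      rw [add_smul]
      exact Submodule.add_mem _ (ha y) (hb y)
  | smul b a _ ha =>
      intro y
      rw [smul_eq_mul, mul_smul]
      exact Submodule.smul_mem _ b (ha y)

theorem leibniz_one {A V : Type*} [CommRing A] [AddCommGroup V] [Module A V]
    (g : A → V) (h : ∀ a b : A, g (a * b) = a • g b + b • g a) : g 1 = 0 := by
  have h1 := h 1 1
  simp only [mul_one, one_smul] at h1
  exact left_eq_add.mp h1

omit [DirectSum.Decomposition ℳ] [SetLike.GradedSMul 𝒜 ℳ] in
theorem derivation_ext (s : Set B) (hgen : Algebra.adjoin K s = ⊤)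
    (d d' : B →ₗ[K] M)
    (hd : ∀ a b : B, d (a * b) = a • d b + b • d a)
    (hd' : ∀ a b : B, d' (a * b) = a • d' b + b • d' a)
    (hagree : ∀ x ∈ s, d x = d' x) : d = d' := by
  ext x
  have hx : x ∈ Algebra.adjoin K s := hgen ▸ Algebra.mem_top
  induction hx using Algebra.adjoin_induction with
  | mem x hxs => exact hagree x hxs
  | algebraMap r =>
      rw [Algebra.algebraMap_eq_smul_one, map_smul, map_smul,
        leibniz_one (⇑d) hd, leibniz_one (⇑d') hd']
  | add x y _ _ hx hy => rw [map_add, map_add, hx, hy]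
  | mul x y _ _ hx hy => rw [hd, hd', hx, hy]

end TruncAux

open TruncAux

/-- The degree-0 case of Proposition 4.1.4: for a commutative graded `K`-algebra
`B = ⊕_{i≥0} Bᵢ` finitely generated by homogeneous elements and a finitely generated
graded `B`-module `M`, every degree-preserving `K`-derivation `B → M` maps
`B_{>q}` into `⊕_{i>q} Mᵢ` (hence induces a degree-preserving derivation
`B_{≤q} → M_{≤q}`), and there is a `q₀` such that for all `q ≥ q₀` this truncation
is a bijection from degree-preserving `K`-derivations `B → M` onto degree-preserving
`K`-derivations `B_{≤q} → M_{≤q}`. -/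
theorem truncation_bijective_on_graded_derivations
    (K B M : Type*) [Field K] [CommRing B] [Algebra K B]
    (𝒜 : ℕ → Submodule K B) [GradedAlgebra 𝒜]
    (S : Finset B) (hShom : ∀ s ∈ S, SetLike.IsHomogeneousElem 𝒜 s)
    (hSgen : Algebra.adjoin K (S : Set B) = ⊤)
    [AddCommGroup M] [Module K M] [Module B M] [IsScalarTower K B M]
    [Module.Finite B M]
    (ℳ : ℕ → Submodule K M) [DirectSum.Decomposition ℳ] [SetLike.GradedSMul 𝒜 ℳ] :
    -- every degree-preserving derivation maps B_{>q} into ⊕_{i>q} Mᵢ and induces a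
    -- degree-preserving derivation on the truncations
    (∀ q : ℕ, ∀ (J : Ideal B) (N : Submodule B M),
      J = Ideal.span (⋃ i ∈ Set.Ioi q, (𝒜 i : Set B)) →
      N = Submodule.span B (⋃ i ∈ Set.Ioi q, (ℳ i : Set M)) →
      ∀ d : B →ₗ[K] M,
        (∀ a b : B, d (a * b) = a • d b + b • d a) →
        (∀ i : ℕ, ∀ a ∈ 𝒜 i, d a ∈ ℳ i) →
        (∀ x ∈ J, d x ∈ N) ∧
        ∃ D : (B ⧸ J) →ₗ[K] (M ⧸ N),
          (∀ a b : B, D (Ideal.Quotient.mk J a * Ideal.Quotient.mk J b)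
              = a • D (Ideal.Quotient.mk J b) + b • D (Ideal.Quotient.mk J a)) ∧
          (∀ i : ℕ, ∀ a ∈ 𝒜 i, D (Ideal.Quotient.mk J a)
              ∈ Submodule.map (LinearMap.restrictScalars K N.mkQ) (ℳ i)) ∧
          (∀ x : B, D (Ideal.Quotient.mk J x) = N.mkQ (d x))) ∧
    -- for q large, truncation is a bijection onto degree-preserving derivations
    -- of the truncated algebra with values in the truncated module
    (∃ q₀ : ℕ, ∀ q : ℕ, q₀ ≤ q → ∀ (J : Ideal B) (N : Submodule B M),
      J = Ideal.span (⋃ i ∈ Set.Ioi q, (𝒜 i : Set B)) →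
      N = Submodule.span B (⋃ i ∈ Set.Ioi q, (ℳ i : Set M)) →
      ∀ D : (B ⧸ J) →ₗ[K] (M ⧸ N),
        (∀ a b : B, D (Ideal.Quotient.mk J a * Ideal.Quotient.mk J b)
            = a • D (Ideal.Quotient.mk J b) + b • D (Ideal.Quotient.mk J a)) →
        (∀ i : ℕ, ∀ a ∈ 𝒜 i, D (Ideal.Quotient.mk J a)
            ∈ Submodule.map (LinearMap.restrictScalars K N.mkQ) (ℳ i)) →
        ∃! d : B →ₗ[K] M,
          ((∀ a b : B, d (a * b) = a • d b + b • d a) ∧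
            (∀ i : ℕ, ∀ a ∈ 𝒜 i, d a ∈ ℳ i)) ∧
          (∀ x : B, D (Ideal.Quotient.mk J x) = N.mkQ (d x))) := by
  classical
  constructor
  · -- Part 1
    intro q J N hJ hN d hLeib hDeg
    have hmem : ∀ x ∈ J, d x ∈ N := by
      intro x hx
      rw [hN]
      rw [hJ] at hx
      induction hx using Submodule.span_induction with
      | mem g hg =>
          obtain ⟨i, hi, hgi⟩ := Set.mem_iUnion₂.mp hg
          exact Submodule.subset_span (Set.mem_iUnion₂.mpr ⟨i, hi, hDeg i g hgi⟩)
      | zero => rw [map_zero]; exact Submodule.zero_mem _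
      | add x y _ _ hx hy => rw [map_add]; exact Submodule.add_mem _ hx hy
      | smul a x hxJ hx =>
          rw [smul_eq_mul, hLeib a x]
          exact Submodule.add_mem _ (Submodule.smul_mem _ a hx)
            (ideal_smul_mem_span 𝒜 ℳ hxJ (d a))
    refine ⟨hmem, ?_⟩
    have hker : (Submodule.restrictScalars K J) ≤
        LinearMap.ker ((LinearMap.restrictScalars K N.mkQ) ∘ₗ d) := by
      intro x hx
      rw [LinearMap.mem_ker, LinearMap.comp_apply, LinearMap.restrictScalars_apply,
        Submodule.mkQ_apply]
      exact (Submodule.Quotient.mk_eq_zero N).mpr (hmem x hx)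
    refine ⟨(Submodule.liftQ (Submodule.restrictScalars K J) _ hker) ∘ₗ
      (Submodule.Quotient.restrictScalarsEquiv K J).symm.toLinearMap, ?_⟩
    have key : ∀ x : B,
        ((Submodule.liftQ (Submodule.restrictScalars K J) _ hker) ∘ₗ
          (Submodule.Quotient.restrictScalarsEquiv K J).symm.toLinearMap)
            (Ideal.Quotient.mk J x) = N.mkQ (d x) := by
      intro x
      rw [← Ideal.Quotient.mk_eq_mk, LinearMap.comp_apply,
        LinearEquiv.coe_toLinearMap, Submodule.Quotient.restrictScalarsEquiv_symm_mk,
        Submodule.liftQ_apply, LinearMap.comp_apply, LinearMap.restrictScalars_apply]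
    refine ⟨?_, ?_, key⟩
    · intro a b
      rw [← map_mul, key, key, key, hLeib a b, map_add, map_smul, map_smul]
    · intro i a ha
      exact Submodule.mem_map.mpr ⟨d a, hDeg i a ha, (key a).symm⟩
  · -- Part 2
    choose w hw using fun s : (S : Set B) => hShom s.1 (Finset.mem_coe.mp s.2)
    set ev : MvPolynomial (S : Set B) K →ₐ[K] B :=
      MvPolynomial.aeval (Subtype.val : ((S : Set B)) → B) with hevdef
    have hsurj : Function.Surjective ev := by
      rw [← AlgHom.range_eq_top, hevdef, ← Algebra.adjoin_eq_range]
      exact hSgen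
    set I : Ideal (MvPolynomial (S : Set B) K) := RingHom.ker ev with hIdef
    obtain ⟨G, hG⟩ := IsNoetherian.noetherian I
    refine ⟨(Finset.univ.sup w) ⊔ G.sup (fun g =>
      (MvPolynomial.weightedHomogeneousComponent_finsupp (w := w) (φ := g)).toFinset.sup id),
      ?_⟩
    intro q hq J N hJ hN D hDLeib hDdeg
    -- values on the variables
    choose ms hms1 hms2 using fun s : (S : Set B) =>
      Submodule.mem_map.mp (hDdeg (w s) s.1 (hw s))
    have hms2' : ∀ s : (S : Set B), N.mkQ (ms s) = D (Ideal.Quotient.mk J s.1) := by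
      intro s
      have h := hms2 s
      rwa [LinearMap.restrictScalars_apply] at h
    set δ : MvPolynomial (S : Set B) K →ₗ[K] M :=
      TruncAux.delta (Subtype.val : ((S : Set B)) → B) ms with hδdef
    -- D kills mk 1
    have hD1 : D (Ideal.Quotient.mk J 1) = 0 := by
      have h := hDLeib 1 1
      rw [← map_mul, mul_one] at h
      simp only [one_smul] at h
      exact left_eq_add.mp h
    -- master identity
    have MI : ∀ p : MvPolynomial (S : Set B) K,
        D (Ideal.Quotient.mk J (ev p))
          = ∑ s : (S : Set B), ev (MvPolynomial.pderiv s p)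
              • D (Ideal.Quotient.mk J s.1) := by
      intro p
      induction p using MvPolynomial.induction_on with
      | C a =>
          have h1 : ev (MvPolynomial.C a) = algebraMap K B a := by
            rw [hevdef]; exact MvPolynomial.aeval_C _ _
          rw [h1, Ideal.Quotient.mk_algebraMap, Algebra.algebraMap_eq_smul_one, map_smul]
          have h2 : (1 : B ⧸ J) = Ideal.Quotient.mk J 1 := (map_one _).symm
          rw [h2, hD1, smul_zero]
          refine (Finset.sum_eq_zero fun s _ => ?_).symm
          rw [MvPolynomial.pderiv_C, map_zero, zero_smul]
      | add p p' hp hp' =>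
          rw [map_add, map_add, map_add, hp, hp', ← Finset.sum_add_distrib]
          refine Finset.sum_congr rfl fun s _ => ?_
          rw [map_add, map_add, add_smul]
      | mul_X p t hp =>
          have hXt : ev (MvPolynomial.X t) = (t : B) := by
            rw [hevdef]; exact MvPolynomial.aeval_X _ _
          rw [map_mul, hXt, map_mul, hDLeib (ev p) t.1, hp]
          have h3 : ∀ s : (S : Set B),
              ev (MvPolynomial.pderiv s (p * MvPolynomial.X t))
                = ev (MvPolynomial.pderiv s p) * (t : B)
                  + ev p * (if s = t then 1 else 0) := by
            intro s
            rw [MvPolynomial.pderiv_mul, map_add, map_mul, map_mul, hXt]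
            congr 1
            rcases eq_or_ne s t with rfl | hst
            · rw [MvPolynomial.pderiv_X_self, map_one, if_pos rfl]
            · rw [MvPolynomial.pderiv_X_of_ne (Ne.symm hst), map_zero, if_neg hst]
          have h4 : ∀ s : (S : Set B),
              (ev (MvPolynomial.pderiv s p) * (t : B)) • D (Ideal.Quotient.mk J s.1)
                = (t : B) • (ev (MvPolynomial.pderiv s p) • D (Ideal.Quotient.mk J s.1)) := by
            intro s; rw [mul_comm, mul_smul]
          have h5 : ∀ s : (S : Set B),
              (ev p * (if s = t then 1 else 0)) • D (Ideal.Quotient.mk J s.1)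
                = if s = t then ev p • D (Ideal.Quotient.mk J s.1) else 0 := by
            intro s
            rcases eq_or_ne s t with rfl | hst
            · rw [if_pos rfl, if_pos rfl, mul_one]
            · rw [if_neg hst, if_neg hst, mul_zero, zero_smul]
          have hR : (∑ s : (S : Set B), ev (MvPolynomial.pderiv s (p * MvPolynomial.X t))
                • D (Ideal.Quotient.mk J s.1))
              = (∑ s : (S : Set B), (t : B) • (ev (MvPolynomial.pderiv s p)
                    • D (Ideal.Quotient.mk J s.1)))
                + ∑ s : (S : Set B),
                    (if s = t then ev p • D (Ideal.Quotient.mk J s.1) else 0) := by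
            rw [← Finset.sum_add_distrib]
            refine Finset.sum_congr rfl fun s _ => ?_
            rw [h3 s, add_smul, h4 s, h5 s]
          rw [hR, Finset.sum_ite_eq' Finset.univ t
            (fun s => ev p • D (Ideal.Quotient.mk J s.1)), if_pos (Finset.mem_univ t),
            ← Finset.smul_sum, add_comm]
    -- key identity relating δ and D
    have KI : ∀ p : MvPolynomial (S : Set B) K,
        N.mkQ (δ p) = D (Ideal.Quotient.mk J (ev p)) := by
      intro p
      rw [MI p, hδdef, TruncAux.delta_apply, map_sum]
      refine Finset.sum_congr rfl fun s _ => ?_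
      rw [map_smul, hms2' s]
    -- δ kills homogeneous elements of I of low degree
    have hkill_hom : ∀ e ≤ q, ∀ p : MvPolynomial (S : Set B) K,
        p.IsWeightedHomogeneous w e → p ∈ I → δ p = 0 := by
      intro e he p hph hpI
      have h1 : δ p ∈ ℳ e := by
        rw [hδdef]
        exact TruncAux.delta_mem 𝒜 ℳ w Subtype.val ms hw hms1 hph
      have h2 : N.mkQ (δ p) = 0 := by
        rw [KI p, RingHom.mem_ker.mp hpI, map_zero, map_zero]
      have h3 : δ p ∈ N := (Submodule.Quotient.mk_eq_zero N).mp
        (by rwa [Submodule.mkQ_apply] at h2)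
      exact TruncAux.eq_zero_of_low_mem_span 𝒜 ℳ he h1 (hN ▸ h3)
    -- δ kills all of I
    have hkill : ∀ p ∈ I, δ p = 0 := by
      intro p hp
      rw [← hG] at hp
      suffices h : p ∈ I ∧ δ p = 0 from h.2
      induction hp using Submodule.span_induction with
      | mem g hg =>
          have hgG : g ∈ G := hg
          have hgI : g ∈ I := hG ▸ Submodule.subset_span hg
          have hfin := MvPolynomial.weightedHomogeneousComponent_finsupp (w := w) (φ := g)
          have hdec : (∑ e ∈ hfin.toFinset, MvPolynomial.weightedHomogeneousComponent w e g)
              = g := by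
            rw [← finsum_eq_sum _ hfin]
            exact MvPolynomial.sum_weightedHomogeneousComponent w g
          have hA : ∀ e ∈ hfin.toFinset,
              ev (MvPolynomial.weightedHomogeneousComponent w e g) ∈ 𝒜 e := by
            intro e _
            rw [hevdef]
            exact TruncAux.aeval_mem 𝒜 w Subtype.val hw
              (MvPolynomial.weightedHomogeneousComponent_isWeightedHomogeneous e g)
          have hzero : ∀ e ∈ hfin.toFinset,
              ev (MvPolynomial.weightedHomogeneousComponent w e g) = 0 := by
            refine TruncAux.sum_homog_eq_zero 𝒜 hA ?_
            rw [← map_sum, hdec]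
            exact RingHom.mem_ker.mp hgI
          have hbound : ∀ e ∈ hfin.toFinset, e ≤ q := by
            intro e he
            have h1 : e ≤ hfin.toFinset.sup id := Finset.le_sup (f := id) he
            have h2 : hfin.toFinset.sup id ≤ G.sup (fun g =>
                (MvPolynomial.weightedHomogeneousComponent_finsupp (w := w)
                  (φ := g)).toFinset.sup id) := Finset.le_sup (f := fun g =>
                    (MvPolynomial.weightedHomogeneousComponent_finsupp (w := w)
                      (φ := g)).toFinset.sup id) hgG
            exact le_trans (le_trans h1 h2) (le_trans le_sup_right hq)
          refine ⟨hgI, ?_⟩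
          rw [← hdec, map_sum]
          refine Finset.sum_eq_zero fun e he => ?_
          exact hkill_hom e (hbound e he) _
            (MvPolynomial.weightedHomogeneousComponent_isWeightedHomogeneous e g)
            (RingHom.mem_ker.mpr (hzero e he))
      | zero => exact ⟨Submodule.zero_mem I, map_zero δ⟩
      | add x y _ _ hx hy =>
          exact ⟨Submodule.add_mem I hx.1 hy.1, by rw [map_add, hx.2, hy.2, add_zero]⟩
      | smul r x _ hx =>
          refine ⟨Submodule.smul_mem I r hx.1, ?_⟩
          rw [smul_eq_mul, hδdef, TruncAux.delta_mul]
          have hev0 : MvPolynomial.aeval (Subtype.val : ((S : Set B)) → B) x = 0 :=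
            RingHom.mem_ker.mp hx.1
          rw [hev0, zero_smul, add_zero]
          have hx2 : TruncAux.delta (K := K) (Subtype.val : ((S : Set B)) → B) ms x = 0 := hx.2
          rw [hx2, smul_zero]
    -- fibers of ev
    have hfib : ∀ p p' : MvPolynomial (S : Set B) K, ev p = ev p' → δ p = δ p' := by
      intro p p' h
      have hm : p - p' ∈ I := by rw [hIdef, RingHom.mem_ker, map_sub, h, sub_self]
      have h0 := hkill _ hm
      rw [map_sub, sub_eq_zero] at h0
      exact h0
    -- the lifted derivation
    obtain ⟨d, hd0⟩ : ∃ d : B →ₗ[K] M, ∀ p : MvPolynomial (S : Set B) K, d (ev p) = δ p := by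
      refine ⟨⟨⟨fun b => δ (hsurj b).choose, ?_⟩, ?_⟩, ?_⟩
      · intro b c
        have h := hfib ((hsurj (b + c)).choose) ((hsurj b).choose + (hsurj c).choose)
          (by rw [map_add, (hsurj b).choose_spec, (hsurj c).choose_spec,
            (hsurj (b + c)).choose_spec])
        simp only [h, map_add]
      · intro k b
        have h := hfib ((hsurj (k • b)).choose) (k • (hsurj b).choose)
          (by rw [map_smul, (hsurj b).choose_spec, (hsurj (k • b)).choose_spec])
        simp only [h, map_smul, RingHom.id_apply]
      · intro p
        exact hfib _ _ (hsurj (ev p)).choose_spec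
    have hdLeib : ∀ a b : B, d (a * b) = a • d b + b • d a := by
      intro a b
      obtain ⟨p, rfl⟩ := hsurj a
      obtain ⟨p', rfl⟩ := hsurj b
      rw [← map_mul, hd0, hd0, hd0, hδdef, TruncAux.delta_mul]
    have hdDeg : ∀ i : ℕ, ∀ a ∈ 𝒜 i, d a ∈ ℳ i := by
      intro i a ha
      obtain ⟨p, rfl⟩ := hsurj a
      rw [hd0]
      have hfin := MvPolynomial.weightedHomogeneousComponent_finsupp (w := w) (φ := p)
      have hdec : (∑ e ∈ hfin.toFinset, MvPolynomial.weightedHomogeneousComponent w e p)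
          = p := by
        rw [← finsum_eq_sum _ hfin]
        exact MvPolynomial.sum_weightedHomogeneousComponent w p
      have hA : ∀ e ∈ hfin.toFinset,
          ev (MvPolynomial.weightedHomogeneousComponent w e p) ∈ 𝒜 e := by
        intro e _
        rw [hevdef]
        exact TruncAux.aeval_mem 𝒜 w Subtype.val hw
          (MvPolynomial.weightedHomogeneousComponent_isWeightedHomogeneous e p)
      have hsumA : (∑ e ∈ hfin.toFinset,
          ev (MvPolynomial.weightedHomogeneousComponent w e p)) ∈ 𝒜 i := by
        rw [← map_sum, hdec]; exact ha
      have hvanish := TruncAux.sum_homog_mem 𝒜 hA hsumA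
      rw [← hdec, map_sum]
      refine Submodule.sum_mem _ fun e he => ?_
      rcases eq_or_ne e i with rfl | hei
      · rw [hδdef]
        exact TruncAux.delta_mem 𝒜 ℳ w Subtype.val ms hw hms1
          (MvPolynomial.weightedHomogeneousComponent_isWeightedHomogeneous e p)
      · rw [hkill _ (RingHom.mem_ker.mpr (hvanish e he hei))]
        exact Submodule.zero_mem _
    have htrunc : ∀ x : B, D (Ideal.Quotient.mk J x) = N.mkQ (d x) := by
      intro x
      obtain ⟨p, rfl⟩ := hsurj x
      rw [hd0, KI]
    refine ⟨d, ⟨⟨hdLeib, hdDeg⟩, htrunc⟩, ?_⟩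
    rintro d' ⟨⟨hL', hdeg'⟩, ht'⟩
    refine TruncAux.derivation_ext (S : Set B) hSgen d' d hL' hdLeib ?_
    intro x hx
    have h1 : d' x - d x ∈ ℳ (w ⟨x, hx⟩) :=
      sub_mem (hdeg' _ x (hw ⟨x, hx⟩)) (hdDeg _ x (hw ⟨x, hx⟩))
    have h2 : N.mkQ (d' x) = N.mkQ (d x) := (ht' x).symm.trans (htrunc x)
    have h3 : d' x - d x ∈ N := by
      rw [Submodule.mkQ_apply, Submodule.mkQ_apply] at h2
      exact (Submodule.Quotient.eq N).mp h2
    have h4 : w ⟨x, hx⟩ ≤ q :=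
      le_trans (le_trans (Finset.le_sup (Finset.mem_univ _)) le_sup_left) hq
    have h5 := TruncAux.eq_zero_of_low_mem_span 𝒜 ℳ h4 h1 (hN ▸ h3)
    exact sub_eq_zero.mp h5
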